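/- Let q ∈ (0,1/2) be irrational and define κ_i(q) = ⌊1/q⌋ − 1 for i = 1 and κ_i(q) = ⌊i/q⌋ − ⌊(i−1)/q⌋ − 2 for i ≥ 2, and write κ = κ_1(q). There exists J ∈ ℕ such that whenever κ_i(q)κ_{i+1}(q)…κ_{i+N}(q)κ_{i+N+1}(q) = κ(κ−1)^N κ (a block of exactly N consecutive values κ−1 flanked by two values κ), then N ∈ {J, J+1}. -/

import Mathlib

/-- `κ_i(q)`: `κ_1(q) = ⌊1/q⌋ − 1` and `κ_i(q) = ⌊i/q⌋ − ⌊(i−1)/q⌋ − 2` for `i ≥ 2`. -/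
noncomputable def kappaZ (q : ℝ) (i : ℕ) : ℤ :=
  if i = 1 then ⌊1 / q⌋ - 1 else ⌊(i : ℝ) / q⌋ - ⌊((i : ℝ) - 1) / q⌋ - 2

/-- For irrational `q ∈ (0,1/2)` there exists `J` such that every maximal block of
consecutive values `κ−1` in the sequence `(κ_i(q))`, flanked by two values `κ = κ_1(q)`,
has length `J` or `J+1`. -/
theorem kappa_block_lengths (q : ℝ) (hq0 : 0 < q) (hq2 : q < 1 / 2)
    (hirr : Irrational q) :
    ∃ J : ℕ, ∀ i N : ℕ, 1 ≤ i →
      kappaZ q i = kappaZ q 1 →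
      (∀ j, 1 ≤ j → j ≤ N → kappaZ q (i + j) = kappaZ q 1 - 1) →
      kappaZ q (i + N + 1) = kappaZ q 1 →
      N = J ∨ N = J + 1 := by
  have hq : q ≠ 0 := ne_of_gt hq0
  have hαirr : Irrational (1 / q) := by
    simpa [one_div] using hirr.inv
  set k : ℤ := ⌊1 / q⌋ with hk
  set β : ℝ := 1 / q - k with hβdef
  have hβirr : Irrational β := hαirr.sub_intCast k
  have hβ0 : 0 < β := by
    have h1 := Int.floor_le (1 / q)
    have h2 : (1 / q : ℝ) ≠ (k : ℝ) := hαirr.ne_int k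
    have h3 : (k : ℝ) < 1 / q := lt_of_le_of_ne h1 (Ne.symm h2)
    simp only [hβdef]; linarith
  have hβ1 : β < 1 := by
    have := Int.lt_floor_add_one (1 / q)
    simp only [hβdef]; linarith [this]
  have hstrict : ∀ n : ℕ, 1 ≤ n → ∀ m : ℤ, (m : ℝ) ≠ (n : ℝ) * β := by
    intro n hn m
    have h : Irrational ((n : ℝ) * β) := hβirr.natCast_mul (by omega)
    exact (h.ne_int m).symm
  have hfl : ∀ n : ℕ, ⌊(n : ℝ) / q⌋ = n * k + ⌊(n : ℝ) * β⌋ := by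
    intro n
    have h : (n : ℝ) / q = (n : ℝ) * β + (((n : ℤ) * k : ℤ) : ℝ) := by
      rw [hβdef]; push_cast; ring
    rw [h, Int.floor_add_intCast]; ring
  have hκ1 : kappaZ q 1 = k - 1 := by simp [kappaZ, hk]
  have hκn : ∀ n : ℕ, 2 ≤ n →
      kappaZ q n = k + (⌊(n : ℝ) * β⌋ - ⌊((n - 1 : ℕ) : ℝ) * β⌋) - 2 := by
    intro n hn
    have hne : n ≠ 1 := by omega
    have hcast : ((n : ℝ) - 1) = ((n - 1 : ℕ) : ℝ) := by
      have h1 : (1 : ℕ) ≤ n := by omega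
      push_cast [Nat.cast_sub h1]; ring
    rw [kappaZ, if_neg hne, hcast, hfl n, hfl (n - 1)]
    have h2 : ((n - 1 : ℕ) : ℤ) = (n : ℤ) - 1 := by omega
    rw [h2]; ring
  refine ⟨(⌊1 / β⌋ - 1).toNat, ?_⟩
  intro i N hi h1 hmid hend
  have hL1 : 1 ≤ ⌊1 / β⌋ := by
    have h : (1 : ℝ) ≤ 1 / β := le_of_lt (one_lt_one_div hβ0 hβ1)
    exact Int.le_floor.mpr (by exact_mod_cast h)
  have hmid' : ∀ j, 1 ≤ j → j ≤ N →
      ⌊((i + j : ℕ) : ℝ) * β⌋ = ⌊((i + j - 1 : ℕ) : ℝ) * β⌋ := by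
    intro j hj1 hjN
    have h2 : 2 ≤ i + j := by omega
    have h := hmid j hj1 hjN
    rw [hκn (i + j) h2, hκ1] at h
    omega
  have hrun : ∀ j, j ≤ N → ⌊((i + j : ℕ) : ℝ) * β⌋ = ⌊((i : ℕ) : ℝ) * β⌋ := by
    intro j hj
    induction j with
    | zero => rfl
    | succ j ih =>
      have h1' := hmid' (j + 1) (by omega) hj
      have he : i + (j + 1) - 1 = i + j := by omega
      rw [he] at h1'
      rw [h1', ih (by omega)]
  have hend' : ⌊((i + N + 1 : ℕ) : ℝ) * β⌋ = ⌊((i + N : ℕ) : ℝ) * β⌋ + 1 := by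
    have h2 : 2 ≤ i + N + 1 := by omega
    have h := hend
    rw [hκn (i + N + 1) h2, hκ1] at h
    have e : i + N + 1 - 1 = i + N := by omega
    rw [e] at h
    omega
  rcases eq_or_lt_of_le hi with h1i | h2i
  · -- i = 1
    have hi1 : i = 1 := h1i.symm
    subst hi1
    have hg1 : ⌊((1 : ℕ) : ℝ) * β⌋ = 0 := by
      rw [Int.floor_eq_zero_iff]
      constructor <;> simp <;> linarith
    have hgN : ⌊((1 + N : ℕ) : ℝ) * β⌋ = 0 := by rw [hrun N le_rfl, hg1]
    have hgN2 : ⌊((1 + N + 1 : ℕ) : ℝ) * β⌋ = 1 := by rw [hend', hgN]; ring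
    have hlt : ((1 + N : ℕ) : ℝ) * β < 1 := by
      have := Int.lt_floor_add_one (((1 + N : ℕ) : ℝ) * β)
      rw [hgN] at this; push_cast at this ⊢; linarith
    have hgt : (1 : ℝ) < ((1 + N + 1 : ℕ) : ℝ) * β := by
      have h := Int.floor_le (((1 + N + 1 : ℕ) : ℝ) * β)
      rw [hgN2] at h
      have hne := hstrict (1 + N + 1) (by omega) 1
      push_cast at h hne ⊢
      rcases lt_or_eq_of_le h with h' | h'
      · linarith
      · exact absurd h' hne
    have hub : ((N : ℤ) + 1) ≤ ⌊1 / β⌋ := by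
      apply Int.le_floor.mpr
      rw [le_div_iff₀ hβ0]
      push_cast at hlt ⊢
      linarith
    have hlb : ⌊1 / β⌋ < (N : ℤ) + 2 := by
      have h := Int.floor_le (1 / β)
      have h2 : (1 : ℝ) / β < ((N : ℝ) + 2) := by
        rw [div_lt_iff₀ hβ0]
        push_cast at hgt ⊢
        linarith
      have : (⌊1 / β⌋ : ℝ) < (N : ℝ) + 2 := lt_of_le_of_lt h h2
      exact_mod_cast this
    left; omega
  · -- 2 ≤ i
    have h2i' : 2 ≤ i := h2i
    set m : ℤ := ⌊((i : ℕ) : ℝ) * β⌋ with hm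
    have hgprev : ⌊((i - 1 : ℕ) : ℝ) * β⌋ = m - 1 := by
      have h := h1
      rw [hκn i h2i', hκ1] at h
      omega
    have hgN : ⌊((i + N : ℕ) : ℝ) * β⌋ = m := hrun N le_rfl
    have hgN2 : ⌊((i + N + 1 : ℕ) : ℝ) * β⌋ = m + 1 := by rw [hend', hgN]
    -- real inequalities
    have hA : (m : ℝ) < (i : ℝ) * β := by
      have h := Int.floor_le (((i : ℕ) : ℝ) * β)
      rw [← hm] at h
      rcases lt_or_eq_of_le h with h' | h'
      · exact h'
      · exact absurd h' (hstrict i (by omega) m)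
    have hB : (i : ℝ) * β - β < (m : ℝ) := by
      have h := Int.lt_floor_add_one (((i - 1 : ℕ) : ℝ) * β)
      rw [hgprev] at h
      have hc : ((i - 1 : ℕ) : ℝ) = (i : ℝ) - 1 := by
        push_cast [Nat.cast_sub (by omega : (1:ℕ) ≤ i)]; ring
      rw [hc] at h
      push_cast at h ⊢; nlinarith [h]
    have hC : (i : ℝ) * β + (N : ℝ) * β < (m : ℝ) + 1 := by
      have h := Int.lt_floor_add_one (((i + N : ℕ) : ℝ) * β)
      rw [hgN] at h
      push_cast at h ⊢; nlinarith [h]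
    have hD : (m : ℝ) + 1 < (i : ℝ) * β + (N : ℝ) * β + β := by
      have h := Int.floor_le (((i + N + 1 : ℕ) : ℝ) * β)
      rw [hgN2] at h
      have hne := hstrict (i + N + 1) (by omega) (m + 1)
      push_cast at h hne ⊢
      rcases lt_or_eq_of_le h with h' | h'
      · nlinarith [h']
      · exact absurd h' hne
    have hub : (N : ℤ) ≤ ⌊1 / β⌋ := by
      apply Int.le_floor.mpr
      rw [le_div_iff₀ hβ0]
      push_cast
      linarith [hA, hC]
    have hlb : ⌊1 / β⌋ < (N : ℤ) + 2 := by
      have h := Int.floor_le (1 / β)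
      have h2 : (1 : ℝ) / β < ((N : ℝ) + 2) := by
        rw [div_lt_iff₀ hβ0]
        nlinarith [hB, hD]
      have : (⌊1 / β⌋ : ℝ) < (N : ℝ) + 2 := lt_of_le_of_lt h h2
      exact_mod_cast this
    omega
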